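/- Let M ≥ 2 be an integer, γ ∈ ℝ, and α̃ : ℝ → ℝ. Suppose that for every ω ∈ (-2π/M, 2π/M) with ω ≠ 0 one has α̃(ω) ≡ (π/2)·sign(ω) − γMω/(M−1) (mod 2π), and that for every ω ∈ (-2π/M, 0) one has α̃(ω + 2π/M) ≡ α̃(ω) (mod 2π). Then there exists d ∈ ℤ such that γ = (d + 1/2)(M − 1). -/

import Mathlib

open Real

/-- Quantization of the phase slope γ (from the proof of Proposition 2). -/
theorem stmt_2 (M : ℕ) (hM : 2 ≤ M) (γ : ℝ) (α : ℝ → ℝ)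
    (h1 : ∀ ω : ℝ, -(2 * π / M) < ω → ω < 2 * π / M → ω ≠ 0 →
      ∃ n : ℤ, α ω = π / 2 * Real.sign ω - γ * M * ω / ((M : ℝ) - 1) + 2 * π * n)
    (h2 : ∀ ω : ℝ, -(2 * π / M) < ω → ω < 0 →
      ∃ n : ℤ, α (ω + 2 * π / M) = α ω + 2 * π * n) :
    ∃ d : ℤ, γ = ((d : ℝ) + 1 / 2) * ((M : ℝ) - 1) := by
  have hMR : (2 : ℝ) ≤ (M : ℝ) := by exact_mod_cast hM
  have hM0 : (0 : ℝ) < (M : ℝ) := by linarith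
  have hM0' : (M : ℝ) ≠ 0 := ne_of_gt hM0
  have hM1 : (M : ℝ) - 1 ≠ 0 := by linarith
  have hπ := Real.pi_pos
  have hpos : 0 < π / M := div_pos hπ hM0
  have hlt : π / M < 2 * π / M := by
    rw [div_lt_div_iff₀ hM0 hM0]; nlinarith
  obtain ⟨n1, e1⟩ := h1 (π / M) (by linarith) hlt (ne_of_gt hpos)
  obtain ⟨n2, e2⟩ := h1 (-(π / M)) (by linarith) (by linarith) (by
    exact ne_of_lt (by linarith))
  obtain ⟨n3, e3⟩ := h2 (-(π / M)) (by linarith) (by linarith)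
  rw [show -(π / M) + 2 * π / M = π / M by ring] at e3
  rw [Real.sign_of_pos hpos] at e1
  rw [Real.sign_of_neg (by linarith)] at e2
  refine ⟨n1 - n2 - n3, ?_⟩
  have key : π / 2 * 1 - γ * M * (π / M) / ((M : ℝ) - 1) + 2 * π * n1 =
      (π / 2 * (-1) - γ * M * (-(π / M)) / ((M : ℝ) - 1) + 2 * π * n2) + 2 * π * n3 := by
    rw [← e1, ← e2, e3]
  have hπne : π ≠ 0 := ne_of_gt hπ
  have key2 : γ * (π * M) = (((n1 - n2 - n3 : ℤ) : ℝ) + 1 / 2) * ((M : ℝ) - 1) * (π * M) := by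
    field_simp at key
    push_cast
    linear_combination (-(π * M / 4)) * key
  have := mul_right_cancel₀ (mul_ne_zero hπne hM0') key2
  linarith [this]
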